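/- Let λ ∈ ℝ with λ > -1/2, let s ∈ ℝ with s ≥ 3, and let a ∈ (0,∞). Then ∫_{-1}^{1} (1 + 2at + a²)^{s-1} dμ_λ(t) ≥ ∫_{-1}^{1} (1 + 2at + a²)^{s-2} dμ_{λ+1}(t). -/

import Mathlib

open MeasureTheory

/-- The normalizing constant `c_m = Γ(m/2+1)/(2 Γ(1/2) Γ(m/2+1/2))`. -/
noncomputable def cConst (m : ℝ) : ℝ :=
  Real.Gamma (m / 2 + 1) / (2 * Real.Gamma (1 / 2) * Real.Gamma (m / 2 + 1 / 2))

/-- The probability measure `μ_λ` on `[-1,1]` with density `2 c_{2λ} (1-t²)^{λ-1/2}`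
with respect to Lebesgue measure. -/
noncomputable def muMeasure (l : ℝ) : Measure ℝ :=
  (volume.restrict (Set.Icc (-1 : ℝ) 1)).withDensity
    (fun t => ENNReal.ofReal (2 * cConst (2 * l) * (1 - t ^ 2) ^ (l - 1 / 2)))

open Set
open scoped NNReal ENNReal

namespace Stmt17Aux

lemma measurable_rpow_const (p : ℝ) : Measurable (fun x : ℝ => x ^ p) :=
  measurable_of_continuousOn_compl_singleton 0 fun x hx =>
    (Real.continuousAt_rpow_const x p (Or.inl hx)).continuousWithinAt

lemma measurable_W (p : ℝ) : Measurable (fun t : ℝ => (1 - t ^ 2) ^ p) :=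
  (measurable_rpow_const p).comp (measurable_const.sub (measurable_id.pow_const 2))

lemma integrableOn_W {p : ℝ} (hp : -1 < p) :
    IntegrableOn (fun t : ℝ => (1 - t ^ 2) ^ p) (Icc (-1 : ℝ) 1) := by
  have hm : AEStronglyMeasurable (fun t : ℝ => (1 - t ^ 2) ^ p)
      (volume.restrict (Icc (-1:ℝ) 1)) := (measurable_W p).aestronglyMeasurable
  set M : ℝ := max 1 ((2:ℝ) ^ p) with hM
  have hM0 : 0 ≤ M := le_trans zero_le_one (le_max_left _ _)
  have hbase : ∀ x : ℝ, 1 ≤ x → x ≤ 2 → x ^ p ≤ M := by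
    intro x h1 h2
    rcases le_or_gt 0 p with hp0 | hp0
    · exact le_trans (Real.rpow_le_rpow (by linarith) h2 hp0) (le_max_right _ _)
    · exact le_trans (Real.rpow_le_one_of_one_le_of_nonpos h1 hp0.le) (le_max_left _ _)
  -- integrability on [0,1]
  have h1 : IntegrableOn (fun t : ℝ => (1 - t) ^ p) (Icc (0:ℝ) 1) := by
    have h' := ((intervalIntegral.intervalIntegrable_rpow' (a := 0) (b := 1) hp).comp_sub_left 1).symm
    simpa using (intervalIntegrable_iff_integrableOn_Icc_of_le (by norm_num)).1 (by simpa using h')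
  have h2 : IntegrableOn (fun t : ℝ => (1 + t) ^ p) (Icc (-1:ℝ) 0) := by
    have := (intervalIntegral.intervalIntegrable_rpow' (a := 0) (b := 1) hp).comp_add_right 1
    have h' : IntervalIntegrable (fun x : ℝ => (x + 1) ^ p) volume (-1) 0 := by
      simpa using this
    have := (intervalIntegrable_iff_integrableOn_Icc_of_le (by norm_num : (-1:ℝ) ≤ 0)).1 h'
    exact this.congr_fun (fun x _ => by ring_nf) measurableSet_Icc
  have key1 : IntegrableOn (fun t : ℝ => (1 - t ^ 2) ^ p) (Icc (0:ℝ) 1) := by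
    refine Integrable.mono' ((h1.const_mul M)) (hm.mono_set (Icc_subset_Icc (by norm_num) le_rfl)) ?_
    filter_upwards [ae_restrict_mem measurableSet_Icc] with t ht
    have ht0 : (0:ℝ) ≤ 1 - t := by linarith [ht.2]
    have ht1 : (0:ℝ) ≤ 1 + t := by linarith [ht.1]
    have hsplit : (1 - t ^ 2 : ℝ) ^ p = (1 - t) ^ p * (1 + t) ^ p := by
      rw [← Real.mul_rpow ht0 ht1]; ring_nf
    rw [Real.norm_eq_abs, abs_of_nonneg (Real.rpow_nonneg (by nlinarith [ht.1, ht.2]) p), hsplit]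
    calc (1 - t) ^ p * (1 + t) ^ p ≤ (1 - t) ^ p * M :=
          mul_le_mul_of_nonneg_left (hbase _ (by linarith [ht.1]) (by linarith [ht.2]))
            (Real.rpow_nonneg ht0 p)
      _ = M * (1 - t) ^ p := by ring
  have key2 : IntegrableOn (fun t : ℝ => (1 - t ^ 2) ^ p) (Icc (-1:ℝ) 0) := by
    refine Integrable.mono' ((h2.const_mul M)) (hm.mono_set (Icc_subset_Icc le_rfl (by norm_num))) ?_
    filter_upwards [ae_restrict_mem measurableSet_Icc] with t ht
    have ht0 : (0:ℝ) ≤ 1 - t := by linarith [ht.2]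
    have ht1 : (0:ℝ) ≤ 1 + t := by linarith [ht.1]
    have hsplit : (1 - t ^ 2 : ℝ) ^ p = (1 - t) ^ p * (1 + t) ^ p := by
      rw [← Real.mul_rpow ht0 ht1]; ring_nf
    rw [Real.norm_eq_abs, abs_of_nonneg (Real.rpow_nonneg (by nlinarith [ht.1, ht.2]) p), hsplit]
    exact mul_le_mul_of_nonneg_right (hbase _ (by linarith [ht.2]) (by linarith [ht.1]))
            (Real.rpow_nonneg ht1 p)
  refine (key2.union key1).mono_set (fun t ht => ?_)
  rcases le_total t 0 with h | h
  · exact Or.inl ⟨ht.1, h⟩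
  · exact Or.inr ⟨h, ht.2⟩

lemma integrableOn_mul_W {p : ℝ} (hp : -1 < p) {φ : ℝ → ℝ} (hφ : Continuous φ) :
    IntegrableOn (fun t : ℝ => φ t * (1 - t ^ 2) ^ p) (Icc (-1 : ℝ) 1) := by
  obtain ⟨C, hC⟩ := isCompact_Icc.exists_bound_of_continuousOn
    (s := Icc (-1:ℝ) 1) hφ.continuousOn
  refine (integrableOn_W hp).bdd_mul (c := C) hφ.aestronglyMeasurable ?_
  filter_upwards [ae_restrict_mem measurableSet_Icc] with t ht using hC t ht


lemma odd_vanish {F : ℝ → ℝ} (h : ∀ t, F (-t) = - F t) :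
    ∫ t in Icc (-1 : ℝ) 1, F t = 0 := by
  have h1 : ∫ t in Icc (-1 : ℝ) 1, F t = ∫ t in (-1:ℝ)..1, F t := by
    rw [intervalIntegral.integral_of_le (by norm_num), integral_Icc_eq_integral_Ioc]
  have h2 : (∫ t in (-1:ℝ)..1, F (-t)) = ∫ t in (-1:ℝ)..1, F t := by
    simpa using intervalIntegral.integral_comp_neg (a := (-1:ℝ)) (b := 1) F
  have h3 : (∫ t in (-1:ℝ)..1, F (-t)) = - ∫ t in (-1:ℝ)..1, F t := by
    simp_rw [h]
    exact intervalIntegral.integral_neg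
  rw [h1]
  linarith [h2.symm.trans h3]

lemma moment_identity {l : ℝ} (hl : -1/2 < l) :
    ∫ t in Icc (-1 : ℝ) 1, (1 - (2*l+2) * t^2) * (1 - t^2) ^ (l - 1/2) = 0 := by
  have hl1 : (0:ℝ) < l + 1/2 := by linarith
  set H : ℝ → ℝ := fun t => t * (1 - t ^ 2) ^ (l + 1/2) with hH
  have hderiv : ∀ t ∈ Ioo (-1:ℝ) 1, HasDerivAt H
      ((1 - (2*l+2) * t^2) * (1 - t^2) ^ (l - 1/2)) t := by
    intro t ht
    have hpos : (0:ℝ) < 1 - t ^ 2 := by nlinarith [ht.1, ht.2]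
    have hinner : HasDerivAt (fun t : ℝ => 1 - t ^ 2) (-(2 * t)) t := by
      simpa using (hasDerivAt_pow 2 t).const_sub 1
    have hrpow : HasDerivAt (fun t : ℝ => (1 - t ^ 2) ^ (l + 1/2))
        ((l + 1/2) * (1 - t ^ 2) ^ (l + 1/2 - 1) * (-(2 * t))) t := by
      have := hinner.rpow_const (p := l + 1/2) (Or.inl hpos.ne')
      convert this using 1
      ring
    have := (hasDerivAt_id t).mul hrpow
    convert this using 1
    · rfl
    · rfl
    · rfl
    have he : (1 - t ^ 2 : ℝ) ^ (l + 1/2) = (1 - t ^ 2) ^ (l - 1/2) * (1 - t ^ 2) := by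
      rw [show l + 1/2 = (l - 1/2) + 1 by ring, Real.rpow_add_one hpos.ne']
    have he2 : (l + 1/2 - 1 : ℝ) = l - 1/2 := by ring
    rw [he2, he]
    simp only [id_eq, one_mul]
    ring
  have hint : IntervalIntegrable
      (fun t => (1 - (2*l+2) * t^2) * (1 - t^2) ^ (l - 1/2)) volume (-1) 1 := by
    rw [intervalIntegrable_iff_integrableOn_Icc_of_le (by norm_num)]
    exact integrableOn_mul_W (by linarith) (by continuity)
  have hcontH : Continuous H := by
    apply continuous_id.mul
    exact (continuous_const.sub (continuous_pow 2)).rpow_const (fun x => Or.inr hl1.le)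
  have hz : ((0:ℝ)) ^ (l + 1/2) = 0 := Real.zero_rpow hl1.ne'
  have h10 : H 1 = 0 := by
    simp only [hH, one_pow, sub_self]
    rw [hz]; ring
  have hm0 : H (-1) = 0 := by
    simp only [hH, neg_one_sq, sub_self]
    rw [hz]; ring
  have := intervalIntegral.integral_eq_sub_of_hasDerivAt_of_tendsto (f := H)
    (a := (-1:ℝ)) (b := 1) (by norm_num) hderiv hint
    ((hcontH.tendsto (-1)).mono_left nhdsWithin_le_nhds)
    ((hcontH.tendsto 1).mono_left nhdsWithin_le_nhds)
  rw [h10, hm0] at this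
  rw [integral_Icc_eq_integral_Ioc, ← intervalIntegral.integral_of_le (by norm_num : (-1:ℝ) ≤ 1)]
  simpa using this


lemma cConst_pos {m : ℝ} (hm : -1 < m) : 0 < cConst m := by
  unfold cConst
  have h1 : 0 < Real.Gamma (m/2+1) := Real.Gamma_pos_of_pos (by linarith)
  have h2 : 0 < Real.Gamma (1/2) := Real.Gamma_pos_of_pos (by norm_num)
  have h3 : 0 < Real.Gamma (m/2+1/2) := Real.Gamma_pos_of_pos (by linarith)
  positivity

lemma cConst_rec {l : ℝ} (hl : -1/2 < l) :
    cConst (2*(l+1)) * (2*l+1) = cConst (2*l) * (2*l+2) := by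
  unfold cConst
  have e1 : (2*(l+1))/2 + 1 = (l+1) + 1 := by ring
  have e2 : (2*(l+1))/2 + 1/2 = (l+1/2) + 1 := by ring
  have e3 : (2*l)/2 + 1 = l + 1 := by ring
  have e4 : (2*l)/2 + 1/2 = l + 1/2 := by ring
  rw [e1, e2, e3, e4, Real.Gamma_add_one (by linarith : (0:ℝ) < l+1).ne',
    Real.Gamma_add_one (by linarith : (0:ℝ) < l+1/2).ne']
  have h2 : Real.Gamma (1/2) ≠ 0 := (Real.Gamma_pos_of_pos (by norm_num)).ne'
  have h3 : Real.Gamma (l+1/2) ≠ 0 := (Real.Gamma_pos_of_pos (by linarith)).ne'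
  have h4 : l + 1/2 ≠ 0 := by linarith
  rw [div_mul_eq_mul_div, div_mul_eq_mul_div, div_eq_div_iff (by positivity) (by positivity)]
  ring

lemma rpow_succ {x : ℝ} (hx : 0 ≤ x) {p : ℝ} (hp : p + 1 ≠ 0) : x ^ (p+1) = x ^ p * x := by
  rcases eq_or_lt_of_le hx with h | h
  · rw [← h, Real.zero_rpow hp, mul_zero]
  · exact Real.rpow_add_one h.ne' p

lemma core_ineq {r F G : ℝ} (hr : 0 ≤ r) (hF : 0 ≤ F) (hG : 0 ≤ G) (hsum : 2 ≤ F + G)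
    (hGF : G ≤ F) : 0 ≤ F ^ r * (F - 1) + G ^ r * (G - 1) := by
  have hF1 : 1 ≤ F := by linarith
  rcases le_or_gt 1 G with h | h
  · have h1 := mul_nonneg (Real.rpow_nonneg hF r) (by linarith : (0:ℝ) ≤ F - 1)
    have h2 := mul_nonneg (Real.rpow_nonneg hG r) (by linarith : (0:ℝ) ≤ G - 1)
    linarith
  · have hpow : G ^ r ≤ F ^ r := Real.rpow_le_rpow hG hGF hr
    have h1 : F ^ r * (G - 1) ≤ G ^ r * (G - 1) :=
      mul_le_mul_of_nonpos_right hpow (by linarith)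
    have h2 : 0 ≤ F ^ r * (F - 1) + F ^ r * (G - 1) := by
      nlinarith [mul_nonneg (Real.rpow_nonneg hF r) (show (0:ℝ) ≤ F + G - 2 by linarith)]
    linarith

lemma secant_sign {r aa t₀ : ℝ} (hr : 1 ≤ r) (ha : 0 < aa) (ht₀ : 0 < t₀) (ht₀1 : t₀ ≤ 1)
    {t : ℝ} (ht : t ∈ Icc (-1:ℝ) 1) :
    ((1 + 2*aa*t + aa^2) ^ r -
      (((1 + 2*aa*t₀ + aa^2) ^ r + (1 + 2*aa*(-t₀) + aa^2) ^ r)/2 +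
        ((1 + 2*aa*t₀ + aa^2) ^ r - (1 + 2*aa*(-t₀) + aa^2) ^ r)/(2*t₀) * t)) *
      (t₀^2 - t^2) ≤ 0 := by
  set g : ℝ → ℝ := fun u => (1 + 2*aa*u + aa^2) ^ r with hg
  set L : ℝ → ℝ := fun u => (g t₀ + g (-t₀))/2 + (g t₀ - g (-t₀))/(2*t₀) * u with hL
  show (g t - L t) * (t₀^2 - t^2) ≤ 0
  have hf0 : ∀ u ∈ Icc (-1:ℝ) 1, (0:ℝ) ≤ 1 + 2*aa*u + aa^2 := by
    intro u hu
    nlinarith [mul_nonneg ha.le (show (0:ℝ) ≤ u + 1 by linarith [hu.1]), sq_nonneg (1 - aa)]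
  have ht₀m : t₀ ∈ Icc (-1:ℝ) 1 := ⟨by linarith, ht₀1⟩
  have ht₀m' : -t₀ ∈ Icc (-1:ℝ) 1 := ⟨by linarith, by linarith⟩
  have hconv : ∀ u ∈ Icc (-1:ℝ) 1, ∀ v ∈ Icc (-1:ℝ) 1, ∀ θ η : ℝ, 0 ≤ θ → 0 ≤ η → θ + η = 1 →
      g (θ*u + η*v) ≤ θ * g u + η * g v := by
    intro u hu v hv θ η hθ hη hθη
    have h := (convexOn_rpow hr).2 (Set.mem_Ici.2 (hf0 u hu)) (Set.mem_Ici.2 (hf0 v hv)) hθ hη hθη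
    simp only [smul_eq_mul] at h
    have harg : (1:ℝ) + 2*aa*(θ*u + η*v) + aa^2
        = θ * (1 + 2*aa*u + aa^2) + η * (1 + 2*aa*v + aa^2) := by
      linear_combination (1 + aa^2) * hθη.symm
    simp only [hg]
    rw [harg]
    exact h
  rcases le_or_gt (t^2) (t₀^2) with hcase | hcase
  · -- |t| ≤ t₀, g ≤ L, second factor nonneg
    have h1 : t ≤ t₀ := by nlinarith
    have h2 : -t₀ ≤ t := by nlinarith
    have hθ : (0:ℝ) ≤ (t₀ - t)/(2*t₀) := div_nonneg (by linarith) (by linarith)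
    have hη : (0:ℝ) ≤ (t + t₀)/(2*t₀) := by
      apply div_nonneg (by linarith) (by linarith)
    have hθη : (t₀ - t)/(2*t₀) + (t + t₀)/(2*t₀) = 1 := by
      field_simp
      ring
    have hpt : (t₀ - t)/(2*t₀) * (-t₀) + (t + t₀)/(2*t₀) * t₀ = t := by
      field_simp
      ring
    have := hconv (-t₀) ht₀m' t₀ ht₀m _ _ hθ hη hθη
    rw [hpt] at this
    have hLeq : (t₀ - t)/(2*t₀) * g (-t₀) + (t + t₀)/(2*t₀) * g t₀ = L t := by
      simp only [hL]
      field_simp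
      ring
    have hgle : g t ≤ L t := by rw [← hLeq]; exact this
    have := mul_nonneg (show (0:ℝ) ≤ L t - g t by linarith) (show (0:ℝ) ≤ t₀^2 - t^2 by linarith)
    nlinarith [this]
  · -- |t| > t₀
    have hgge : L t ≤ g t := by
      rcases le_or_gt 0 t with hts | hts
      · -- t > t₀
        have h1 : t₀ < t := by nlinarith
        have hden : (0:ℝ) < t + t₀ := by linarith
        have hθ : (0:ℝ) ≤ (t - t₀)/(t + t₀) := by
          apply div_nonneg (by linarith) (by linarith)
        have hη : (0:ℝ) < (2*t₀)/(t + t₀) := by positivity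
        have hθη : (t - t₀)/(t + t₀) + (2*t₀)/(t + t₀) = 1 := by
          field_simp
          ring
        have hpt : (t - t₀)/(t + t₀) * (-t₀) + (2*t₀)/(t + t₀) * t = t₀ := by
          field_simp
          ring
        have hc := hconv (-t₀) ht₀m' t (by exact ht) _ _ hθ hη.le hθη
        rw [hpt] at hc
        -- hc : g t₀ ≤ θ * g (-t₀) + η * g t
        have hid : (2*t₀)/(t + t₀) * L t = g t₀ - (t - t₀)/(t + t₀) * g (-t₀) := by
          simp only [hL, hg]
          field_simp
          ring
        have : (2*t₀)/(t + t₀) * L t ≤ (2*t₀)/(t + t₀) * g t := by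
          rw [hid]; linarith
        exact le_of_mul_le_mul_left this hη
      · -- t < -t₀
        have h1 : t < -t₀ := by nlinarith
        have hden : (0:ℝ) < t₀ - t := by linarith
        have hθ : (0:ℝ) < (2*t₀)/(t₀ - t) := by positivity
        have hη : (0:ℝ) ≤ (-t - t₀)/(t₀ - t) := by
          apply div_nonneg (by linarith) (by linarith)
        have hθη : (2*t₀)/(t₀ - t) + (-t - t₀)/(t₀ - t) = 1 := by
          field_simp
          ring
        have hpt : (2*t₀)/(t₀ - t) * t + (-t - t₀)/(t₀ - t) * t₀ = -t₀ := by
          field_simp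
          ring
        have hc := hconv t (by exact ht) t₀ ht₀m _ _ hθ.le hη hθη
        rw [hpt] at hc
        have hid : (2*t₀)/(t₀ - t) * L t = g (-t₀) - (-t - t₀)/(t₀ - t) * g t₀ := by
          simp only [hL, hg]
          field_simp
          ring
        have : (2*t₀)/(t₀ - t) * L t ≤ (2*t₀)/(t₀ - t) * g t := by
          rw [hid]; linarith
        exact le_of_mul_le_mul_left this hθ
    have := mul_nonneg (show (0:ℝ) ≤ g t - L t by linarith) (show (0:ℝ) ≤ t^2 - t₀^2 by linarith)
    nlinarith [this]


lemma reflect_integral (F : ℝ → ℝ) :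
    ∫ t in Icc (-1:ℝ) 1, F t = ∫ t in Icc (-1:ℝ) 1, F (-t) := by
  rw [integral_Icc_eq_integral_Ioc, ← intervalIntegral.integral_of_le (by norm_num : (-1:ℝ) ≤ 1),
      integral_Icc_eq_integral_Ioc, ← intervalIntegral.integral_of_le (by norm_num : (-1:ℝ) ≤ 1)]
  have h := intervalIntegral.integral_comp_neg (a := (-1:ℝ)) (b := 1) F
  simpa using h.symm

lemma integral_mu {m : ℝ} (hm : 0 ≤ cConst (2*m)) (F : ℝ → ℝ) :
    ∫ t, F t ∂(muMeasure m)
      = ∫ t in Icc (-1:ℝ) 1, (2 * cConst (2*m) * ((1 - t^2) ^ (m - 1/2))) * F t := by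
  unfold muMeasure
  have hd : Measurable (fun u : ℝ => (2 * cConst (2*m) * ((1 - u^2) ^ (m - 1/2))).toNNReal) :=
    (measurable_const.mul (measurable_W (m - 1/2))).real_toNNReal
  have hde : (fun t : ℝ => ENNReal.ofReal (2 * cConst (2 * m) * (1 - t ^ 2) ^ (m - 1 / 2)))
      = fun t : ℝ => (((2 * cConst (2*m) * ((1 - t^2) ^ (m - 1/2))).toNNReal : ℝ≥0) : ℝ≥0∞) :=
    rfl
  rw [hde, integral_withDensity_eq_integral_smul hd F]
  apply setIntegral_congr_fun measurableSet_Icc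
  intro t ht
  simp only [NNReal.smul_def, smul_eq_mul]
  congr 1
  rw [Real.coe_toNNReal]
  exact mul_nonneg (mul_nonneg (by norm_num) hm)
    (Real.rpow_nonneg (by nlinarith [ht.1, ht.2]) _)

end Stmt17Aux

set_option maxHeartbeats 1600000 in
open Stmt17Aux in
theorem stmt_17 (l : ℝ) (hl : -1 / 2 < l) (s : ℝ) (hs : 3 ≤ s) (a : ℝ) (ha : 0 < a) :
    (∫ t, (1 + 2 * a * t + a ^ 2) ^ (s - 2) ∂(muMeasure (l + 1))) ≤
      ∫ t, (1 + 2 * a * t + a ^ 2) ^ (s - 1) ∂(muMeasure l) := by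
  have hl2 : (0:ℝ) < 2*l+2 := by linarith
  have hWexp : (-1:ℝ) < l - 1/2 := by linarith
  have hs2 : (1:ℝ) ≤ s - 2 := by linarith
  have hc1p : (0:ℝ) < 2 * cConst (2*l) := by
    have := cConst_pos (m := 2*l) (by linarith)
    linarith
  have hc2p : (0:ℝ) < 2 * cConst (2*(l+1)) := by
    have := cConst_pos (m := 2*(l+1)) (by linarith)
    linarith
  have hcr : (2 * cConst (2*(l+1))) * (2*l+1) = (2 * cConst (2*l)) * (2*l+2) := by
    have := cConst_rec hl
    linarith
  have hfc : Continuous (fun t : ℝ => 1 + 2*a*t + a^2) := by continuity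
  have hgc : Continuous (fun t : ℝ => (1 + 2*a*t + a^2) ^ (s-2)) :=
    hfc.rpow_const (fun x => Or.inr (by linarith))
  have hg1c : Continuous (fun t : ℝ => (1 + 2*a*t + a^2) ^ (s-1)) :=
    hfc.rpow_const (fun x => Or.inr (by linarith))
  have hf0 : ∀ t ∈ Icc (-1:ℝ) 1, (0:ℝ) ≤ 1 + 2*a*t + a^2 := by
    intro t ht
    nlinarith [mul_nonneg ha.le (show (0:ℝ) ≤ t+1 by linarith [ht.1]), sq_nonneg (1-a)]
  have h1t : ∀ t ∈ Icc (-1:ℝ) 1, (0:ℝ) ≤ 1 - t^2 := by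
    intro t ht
    nlinarith [ht.1, ht.2]
  have hWnn : ∀ t ∈ Icc (-1:ℝ) 1, (0:ℝ) ≤ (1 - t^2) ^ (l - 1/2) := fun t ht =>
    Real.rpow_nonneg (h1t t ht) _
  -- conversions
  have eqL : (∫ t, (1 + 2 * a * t + a ^ 2) ^ (s - 2) ∂(muMeasure (l + 1)))
      = ∫ t in Icc (-1:ℝ) 1,
          (((2 * cConst (2*(l+1))) * (1 - t^2)) * ((1 + 2*a*t + a^2) ^ (s-2)))
            * ((1 - t^2) ^ (l - 1/2)) := by
    rw [integral_mu (by linarith)]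
    apply setIntegral_congr_fun measurableSet_Icc
    intro t ht
    beta_reduce
    rw [show ((l+1) - 1/2 : ℝ) = (l - 1/2) + 1 by ring,
      rpow_succ (h1t t ht) (show (0:ℝ) < (l - 1/2) + 1 by linarith).ne']
    ring
  have eqR : (∫ t, (1 + 2 * a * t + a ^ 2) ^ (s - 1) ∂(muMeasure l))
      = ∫ t in Icc (-1:ℝ) 1,
          ((2 * cConst (2*l)) * ((1 + 2*a*t + a^2) ^ (s-1))) * ((1 - t^2) ^ (l - 1/2)) := by
    rw [integral_mu (by linarith)]
    apply setIntegral_congr_fun measurableSet_Icc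
    intro t _
    ring
  -- Key 2 : monotone in exponent step
  have iB : IntegrableOn
      (fun t => ((2 * cConst (2*l)) * ((1 + 2*a*t + a^2) ^ (s-2))) * ((1 - t^2) ^ (l - 1/2)))
      (Icc (-1:ℝ) 1) :=
    integrableOn_mul_W hWexp (continuous_const.mul hgc)
  have iC : IntegrableOn
      (fun t => ((2 * cConst (2*l)) * ((1 + 2*a*t + a^2) ^ (s-1))) * ((1 - t^2) ^ (l - 1/2)))
      (Icc (-1:ℝ) 1) :=
    integrableOn_mul_W hWexp (continuous_const.mul hg1c)
  have key2 : (∫ t in Icc (-1:ℝ) 1,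
        ((2 * cConst (2*l)) * ((1 + 2*a*t + a^2) ^ (s-2))) * ((1 - t^2) ^ (l - 1/2)))
      ≤ ∫ t in Icc (-1:ℝ) 1,
        ((2 * cConst (2*l)) * ((1 + 2*a*t + a^2) ^ (s-1))) * ((1 - t^2) ^ (l - 1/2)) := by
    have iD : IntegrableOn
        (fun t => ((2 * cConst (2*l)) * ((1 + 2*a*t + a^2) ^ (s-1)
          - (1 + 2*a*t + a^2) ^ (s-2))) * ((1 - t^2) ^ (l - 1/2))) (Icc (-1:ℝ) 1) :=
      integrableOn_mul_W hWexp (continuous_const.mul (hg1c.sub hgc))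
    have iDneg : IntegrableOn
        (fun t => ((2 * cConst (2*l)) * ((1 + 2*a*(-t) + a^2) ^ (s-1)
          - (1 + 2*a*(-t) + a^2) ^ (s-2))) * ((1 - t^2) ^ (l - 1/2))) (Icc (-1:ℝ) 1) :=
      integrableOn_mul_W hWexp (continuous_const.mul
        ((hg1c.comp continuous_neg).sub (hgc.comp continuous_neg)))
    have hdiff : (∫ t in Icc (-1:ℝ) 1,
          ((2 * cConst (2*l)) * ((1 + 2*a*t + a^2) ^ (s-1))) * ((1 - t^2) ^ (l - 1/2)))
        - (∫ t in Icc (-1:ℝ) 1,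
          ((2 * cConst (2*l)) * ((1 + 2*a*t + a^2) ^ (s-2))) * ((1 - t^2) ^ (l - 1/2)))
        = ∫ t in Icc (-1:ℝ) 1, ((2 * cConst (2*l)) * ((1 + 2*a*t + a^2) ^ (s-1)
            - (1 + 2*a*t + a^2) ^ (s-2))) * ((1 - t^2) ^ (l - 1/2)) := by
      rw [← integral_sub iC iB]
      apply setIntegral_congr_fun measurableSet_Icc
      intro t _
      ring
    have hrefl2 : (∫ t in Icc (-1:ℝ) 1, ((2 * cConst (2*l)) * ((1 + 2*a*t + a^2) ^ (s-1)
          - (1 + 2*a*t + a^2) ^ (s-2))) * ((1 - t^2) ^ (l - 1/2)))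
        = ∫ t in Icc (-1:ℝ) 1, ((2 * cConst (2*l)) * ((1 + 2*a*(-t) + a^2) ^ (s-1)
          - (1 + 2*a*(-t) + a^2) ^ (s-2))) * ((1 - t^2) ^ (l - 1/2)) := by
      rw [reflect_integral (fun t => ((2 * cConst (2*l)) * ((1 + 2*a*t + a^2) ^ (s-1)
          - (1 + 2*a*t + a^2) ^ (s-2))) * ((1 - t^2) ^ (l - 1/2)))]
      apply setIntegral_congr_fun measurableSet_Icc
      intro t _
      simp only [neg_sq]
    have hsum : (∫ t in Icc (-1:ℝ) 1, ((2 * cConst (2*l)) * ((1 + 2*a*t + a^2) ^ (s-1)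
          - (1 + 2*a*t + a^2) ^ (s-2))) * ((1 - t^2) ^ (l - 1/2)))
        + (∫ t in Icc (-1:ℝ) 1, ((2 * cConst (2*l)) * ((1 + 2*a*(-t) + a^2) ^ (s-1)
          - (1 + 2*a*(-t) + a^2) ^ (s-2))) * ((1 - t^2) ^ (l - 1/2)))
        = ∫ t in Icc (-1:ℝ) 1, (((2 * cConst (2*l)) * ((1 + 2*a*t + a^2) ^ (s-1)
            - (1 + 2*a*t + a^2) ^ (s-2))) * ((1 - t^2) ^ (l - 1/2))
          + ((2 * cConst (2*l)) * ((1 + 2*a*(-t) + a^2) ^ (s-1)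
            - (1 + 2*a*(-t) + a^2) ^ (s-2))) * ((1 - t^2) ^ (l - 1/2))) :=
      (integral_add iD iDneg).symm
    have hpos : 0 ≤ ∫ t in Icc (-1:ℝ) 1, (((2 * cConst (2*l)) * ((1 + 2*a*t + a^2) ^ (s-1)
            - (1 + 2*a*t + a^2) ^ (s-2))) * ((1 - t^2) ^ (l - 1/2))
          + ((2 * cConst (2*l)) * ((1 + 2*a*(-t) + a^2) ^ (s-1)
            - (1 + 2*a*(-t) + a^2) ^ (s-2))) * ((1 - t^2) ^ (l - 1/2))) := by
      apply setIntegral_nonneg measurableSet_Icc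
      intro t ht
      have htm : -t ∈ Icc (-1:ℝ) 1 := ⟨by linarith [ht.2], by linarith [ht.1]⟩
      have hF0 := hf0 t ht
      have hG0 := hf0 (-t) htm
      have hsplitF : (1 + 2*a*t + a^2) ^ (s-1) - (1 + 2*a*t + a^2) ^ (s-2)
          = (1 + 2*a*t + a^2) ^ (s-2) * ((1 + 2*a*t + a^2) - 1) := by
        rw [show (s-1:ℝ) = (s-2) + 1 by ring,
          rpow_succ hF0 (show (0:ℝ) < (s-2)+1 by linarith).ne']
        ring
      have hsplitG : (1 + 2*a*(-t) + a^2) ^ (s-1) - (1 + 2*a*(-t) + a^2) ^ (s-2)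
          = (1 + 2*a*(-t) + a^2) ^ (s-2) * ((1 + 2*a*(-t) + a^2) - 1) := by
        rw [show (s-1:ℝ) = (s-2) + 1 by ring,
          rpow_succ hG0 (show (0:ℝ) < (s-2)+1 by linarith).ne']
        ring
      have hbra : 0 ≤ (1 + 2*a*t + a^2) ^ (s-2) * ((1 + 2*a*t + a^2) - 1)
          + (1 + 2*a*(-t) + a^2) ^ (s-2) * ((1 + 2*a*(-t) + a^2) - 1) := by
        rcases le_total (1 + 2*a*(-t) + a^2) (1 + 2*a*t + a^2) with h | h
        · exact core_ineq (r := s-2) (by linarith) hF0 hG0 (by nlinarith [sq_nonneg a]) h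
        · have := core_ineq (r := s-2) (by linarith) hG0 hF0 (by nlinarith [sq_nonneg a]) h
          linarith
      have hrw : ((2 * cConst (2*l)) * ((1 + 2*a*t + a^2) ^ (s-1)
            - (1 + 2*a*t + a^2) ^ (s-2))) * ((1 - t^2) ^ (l - 1/2))
          + ((2 * cConst (2*l)) * ((1 + 2*a*(-t) + a^2) ^ (s-1)
            - (1 + 2*a*(-t) + a^2) ^ (s-2))) * ((1 - t^2) ^ (l - 1/2))
          = ((2 * cConst (2*l)) * ((1 - t^2) ^ (l - 1/2)))
            * ((1 + 2*a*t + a^2) ^ (s-2) * ((1 + 2*a*t + a^2) - 1)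
              + (1 + 2*a*(-t) + a^2) ^ (s-2) * ((1 + 2*a*(-t) + a^2) - 1)) := by
        rw [hsplitF, hsplitG]
        ring
      rw [hrw]
      exact mul_nonneg (mul_nonneg hc1p.le (hWnn t ht)) hbra
    linarith
  -- Key 1 : dimension step
  set t0 : ℝ := Real.sqrt (1/(2*l+2)) with ht0def
  have ht0pos : 0 < t0 := Real.sqrt_pos.mpr (by positivity)
  have ht0sq : t0^2 = 1/(2*l+2) := Real.sq_sqrt (by positivity)
  have ht0le1 : t0 ≤ 1 := by
    rw [ht0def, Real.sqrt_le_one]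
    exact (div_le_one hl2).2 (by linarith)
  set al : ℝ := ((1 + 2*a*t0 + a^2) ^ (s-2) + (1 + 2*a*(-t0) + a^2) ^ (s-2))/2 with hal
  set be : ℝ := ((1 + 2*a*t0 + a^2) ^ (s-2) - (1 + 2*a*(-t0) + a^2) ^ (s-2))/(2*t0) with hbe
  have hccc : ∀ t : ℝ, (2 * cConst (2*(l+1))) * (1 - t^2) - (2 * cConst (2*l))
      = ((2 * cConst (2*(l+1)))/(2*l+2)) * (1 - (2*l+2)*t^2) := by
    intro t
    field_simp
    rw [eq_div_iff (by linarith)]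
    linear_combination (1/2 : ℝ) * hcr
  have hccc2 : ∀ t : ℝ, (2 * cConst (2*(l+1))) * (1 - t^2) - (2 * cConst (2*l))
      = (2 * cConst (2*(l+1))) * (t0^2 - t^2) := by
    intro t
    rw [ht0sq]
    field_simp
    rw [mul_sub _ (1 / (l + 1)), mul_one_div, eq_sub_iff_add_eq, eq_div_iff (by linarith)]
    linear_combination (1/2 : ℝ) * hcr
  have key1 : (∫ t in Icc (-1:ℝ) 1,
        (((2 * cConst (2*(l+1))) * (1 - t^2)) * ((1 + 2*a*t + a^2) ^ (s-2)))
          * ((1 - t^2) ^ (l - 1/2)))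
      ≤ ∫ t in Icc (-1:ℝ) 1,
        ((2 * cConst (2*l)) * ((1 + 2*a*t + a^2) ^ (s-2))) * ((1 - t^2) ^ (l - 1/2)) := by
    have iA : IntegrableOn
        (fun t => (((2 * cConst (2*(l+1))) * (1 - t^2)) * ((1 + 2*a*t + a^2) ^ (s-2)))
          * ((1 - t^2) ^ (l - 1/2))) (Icc (-1:ℝ) 1) :=
      integrableOn_mul_W hWexp ((continuous_const.mul
        (continuous_const.sub (continuous_pow 2))).mul hgc)
    have iT1 : IntegrableOn
        (fun t => (((1 + 2*a*t + a^2) ^ (s-2) - (al + be * t))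
          * ((2 * cConst (2*(l+1))) * (1 - t^2) - (2 * cConst (2*l))))
          * ((1 - t^2) ^ (l - 1/2))) (Icc (-1:ℝ) 1) :=
      integrableOn_mul_W hWexp ((hgc.sub (continuous_const.add
        (continuous_const.mul continuous_id))).mul ((continuous_const.mul
        (continuous_const.sub (continuous_pow 2))).sub continuous_const))
    have iT2a : IntegrableOn
        (fun t => ((al * ((2 * cConst (2*(l+1)))/(2*l+2))) * (1 - (2*l+2)*t^2))
          * ((1 - t^2) ^ (l - 1/2))) (Icc (-1:ℝ) 1) :=
      integrableOn_mul_W hWexp (continuous_const.mul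
        (continuous_const.sub (continuous_const.mul (continuous_pow 2))))
    have iT2b : IntegrableOn
        (fun t => ((be * ((2 * cConst (2*(l+1))) * (1 - t^2) - (2 * cConst (2*l)))) * t)
          * ((1 - t^2) ^ (l - 1/2))) (Icc (-1:ℝ) 1) :=
      integrableOn_mul_W hWexp ((continuous_const.mul ((continuous_const.mul
        (continuous_const.sub (continuous_pow 2))).sub continuous_const)).mul continuous_id)
    have hdiff : (∫ t in Icc (-1:ℝ) 1,
          (((2 * cConst (2*(l+1))) * (1 - t^2)) * ((1 + 2*a*t + a^2) ^ (s-2)))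
            * ((1 - t^2) ^ (l - 1/2)))
        - (∫ t in Icc (-1:ℝ) 1,
          ((2 * cConst (2*l)) * ((1 + 2*a*t + a^2) ^ (s-2))) * ((1 - t^2) ^ (l - 1/2)))
        = ∫ t in Icc (-1:ℝ) 1,
          ((((1 + 2*a*t + a^2) ^ (s-2) - (al + be * t))
            * ((2 * cConst (2*(l+1))) * (1 - t^2) - (2 * cConst (2*l))))
            * ((1 - t^2) ^ (l - 1/2))
          + (((al * ((2 * cConst (2*(l+1)))/(2*l+2))) * (1 - (2*l+2)*t^2))
            * ((1 - t^2) ^ (l - 1/2))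
          + ((be * ((2 * cConst (2*(l+1))) * (1 - t^2) - (2 * cConst (2*l)))) * t)
            * ((1 - t^2) ^ (l - 1/2)))) := by
      rw [← integral_sub iA iB]
      apply setIntegral_congr_fun measurableSet_Icc
      intro t _
      have h := hccc t
      linear_combination (al * ((1 - t^2) ^ (l - 1/2))) * h
    have hT1 : (∫ t in Icc (-1:ℝ) 1,
        (((1 + 2*a*t + a^2) ^ (s-2) - (al + be * t))
          * ((2 * cConst (2*(l+1))) * (1 - t^2) - (2 * cConst (2*l))))
          * ((1 - t^2) ^ (l - 1/2))) ≤ 0 := by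
      apply setIntegral_nonpos measurableSet_Icc
      intro t ht
      have hss := secant_sign (r := s-2) (aa := a) (t₀ := t0) hs2 ha ht0pos ht0le1 ht
      rw [← hal, ← hbe] at hss
      have hsgn : ((1 + 2*a*t + a^2) ^ (s-2) - (al + be * t))
          * ((2 * cConst (2*(l+1))) * (1 - t^2) - (2 * cConst (2*l))) ≤ 0 := by
        rw [hccc2 t]
        nlinarith [hc2p]
      nlinarith [hWnn t ht, hsgn]
    have hT2a : (∫ t in Icc (-1:ℝ) 1,
        ((al * ((2 * cConst (2*(l+1)))/(2*l+2))) * (1 - (2*l+2)*t^2))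
          * ((1 - t^2) ^ (l - 1/2))) = 0 := by
      have hre : (fun t : ℝ => ((al * ((2 * cConst (2*(l+1)))/(2*l+2))) * (1 - (2*l+2)*t^2))
            * ((1 - t^2) ^ (l - 1/2)))
          = fun t : ℝ => (al * ((2 * cConst (2*(l+1)))/(2*l+2)))
            * ((1 - (2*l+2)*t^2) * ((1 - t^2) ^ (l - 1/2))) := by
        funext t
        ring
      rw [hre, integral_const_mul, moment_identity hl, mul_zero]
    have hT2b : (∫ t in Icc (-1:ℝ) 1,
        ((be * ((2 * cConst (2*(l+1))) * (1 - t^2) - (2 * cConst (2*l)))) * t)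
          * ((1 - t^2) ^ (l - 1/2))) = 0 := by
      apply odd_vanish
      intro t
      simp only [neg_sq]
      ring
    have iT23 : IntegrableOn
        (fun t => ((al * ((2 * cConst (2*(l+1)))/(2*l+2))) * (1 - (2*l+2)*t^2))
            * ((1 - t^2) ^ (l - 1/2))
          + ((be * ((2 * cConst (2*(l+1))) * (1 - t^2) - (2 * cConst (2*l)))) * t)
            * ((1 - t^2) ^ (l - 1/2))) (Icc (-1:ℝ) 1) := iT2a.add iT2b
    rw [integral_add iT1 iT23, integral_add iT2a iT2b] at hdiff
    linarith
  rw [eqL, eqR]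
  calc (∫ t in Icc (-1:ℝ) 1,
        (((2 * cConst (2*(l+1))) * (1 - t^2)) * ((1 + 2*a*t + a^2) ^ (s-2)))
          * ((1 - t^2) ^ (l - 1/2)))
      ≤ ∫ t in Icc (-1:ℝ) 1,
        ((2 * cConst (2*l)) * ((1 + 2*a*t + a^2) ^ (s-2))) * ((1 - t^2) ^ (l - 1/2)) := key1
    _ ≤ ∫ t in Icc (-1:ℝ) 1,
        ((2 * cConst (2*l)) * ((1 + 2*a*t + a^2) ^ (s-1))) * ((1 - t^2) ^ (l - 1/2)) := key2
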